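/- For any positive integer k and nonzero integers a, b, there exists exactly one rational number t with 0 < t < 1 such that t·a ∈ ℤ and t^k·b ∈ ℤ if and only if gcd_k(a, b) = 2. -/

import Mathlib

lemma den_dvd_of (t : ℚ) (a : ℤ) (h : ∃ z : ℤ, (z : ℚ) = t * a) : (t.den : ℤ) ∣ a := by
  obtain ⟨z, hz⟩ := h
  have h1 : (z : ℚ) * t.den = t.num * a := by
    rw [hz]; rw [mul_comm t (a:ℚ), mul_assoc, Rat.mul_den_eq_num]; ring
  have h2 : z * (t.den : ℤ) = t.num * a := by exact_mod_cast h1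
  have h3 : (t.den : ℤ) ∣ t.num * a := ⟨z, by linarith [h2]⟩
  have hc : Nat.Coprime t.den t.num.natAbs := (t.reduced).symm
  have h4 : t.den ∣ t.num.natAbs * a.natAbs := by
    have := Int.natAbs_dvd_natAbs.mpr h3
    simpa [Int.natAbs_mul] using this
  have h5 : t.den ∣ a.natAbs := hc.dvd_of_dvd_mul_left h4
  have := Int.natCast_dvd_natCast.mpr h5
  exact (Int.dvd_natAbs).mp this

lemma den_two_le (t : ℚ) (h0 : 0 < t) (h1 : t < 1) : 2 ≤ t.den := by
  by_contra h
  interval_cases h' : t.den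
  · exact t.den_nz (by simpa using h')
  · have : (t.num : ℚ) = t := by
      rw [← Rat.num_div_den t, h']; simp
    have hn0 : 0 < t.num := by
      have : (0:ℚ) < (t.num:ℚ) := by rw [this]; exact h0
      exact_mod_cast this
    have hn1 : t.num < 1 := by
      have : (t.num:ℚ) < 1 := by rw [this]; exact h1
      exact_mod_cast this
    omega

lemma num_lt_den (t : ℚ) (h1 : t < 1) : t.num < t.den := by
  have hd : (0:ℚ) < (t.den : ℚ) := by exact_mod_cast t.pos
  have : (t.num : ℚ) < t.den := by
    calc (t.num : ℚ) = t * t.den := (Rat.mul_den_eq_num t).symm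
      _ < 1 * t.den := by exact mul_lt_mul_of_pos_right h1 hd
      _ = t.den := by ring
  exact_mod_cast this

noncomputable def gcdk (k : ℕ) (a b : ℤ) : ℕ :=
  sSup {d : ℕ | (d : ℤ) ∣ a ∧ (d : ℤ) ^ k ∣ b}

theorem stmt2 (k : ℕ) (hk : 1 ≤ k) (a b : ℤ) (ha : a ≠ 0) (hb : b ≠ 0) :
    (∃! t : ℚ, 0 < t ∧ t < 1 ∧ (∃ z : ℤ, (z : ℚ) = t * a) ∧ (∃ w : ℤ, (w : ℚ) = t ^ k * b)) ↔
      gcdk k a b = 2 := by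
  set S : Set ℕ := {d : ℕ | (d : ℤ) ∣ a ∧ (d : ℤ) ^ k ∣ b} with hS
  have hne : S.Nonempty := ⟨1, ⟨by exact_mod_cast one_dvd a, by norm_num⟩⟩
  have hbdd : BddAbove S := by
    refine ⟨a.natAbs, fun d hd => ?_⟩
    have : (d:ℤ) ∣ a := hd.1
    have h2 : d ∣ a.natAbs := by
      have := Int.natAbs_dvd_natAbs.mpr this
      simpa using this
    exact Nat.le_of_dvd (Int.natAbs_pos.mpr ha) h2
  have hmem : gcdk k a b ∈ S := Nat.sSup_mem hne hbdd
  -- membership of den of a solution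
  have key : ∀ t : ℚ, (0 < t ∧ t < 1 ∧ (∃ z : ℤ, (z : ℚ) = t * a) ∧
      (∃ w : ℤ, (w : ℚ) = t ^ k * b)) → t.den ∈ S ∧ 2 ≤ t.den := by
    intro t ⟨h0, h1, hz, hw⟩
    have hda : (t.den : ℤ) ∣ a := den_dvd_of t a hz
    have hdb : ((t^k).den : ℤ) ∣ b := den_dvd_of (t^k) b hw
    rw [Rat.den_pow] at hdb
    refine ⟨⟨hda, by exact_mod_cast hdb⟩, den_two_le t h0 h1⟩
  constructor
  · rintro ⟨t, ht, huniq⟩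
    obtain ⟨htS, htd⟩ := key t ht
    have hg2 : 2 ≤ gcdk k a b := le_trans htd (le_csSup hbdd htS)
    by_contra hne2
    have hg3 : 3 ≤ gcdk k a b := by omega
    set g := gcdk k a b with hg
    obtain ⟨c, hc⟩ := hmem.1
    obtain ⟨e, he⟩ := hmem.2
    have hgQ : (g : ℚ) ≠ 0 := by positivity
    have p1 : 0 < (1 : ℚ)/g ∧ (1:ℚ)/g < 1 ∧ (∃ z : ℤ, (z : ℚ) = (1:ℚ)/g * a) ∧
        (∃ w : ℤ, (w : ℚ) = ((1:ℚ)/g) ^ k * b) := by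
      refine ⟨by positivity, ?_, ⟨c, ?_⟩, ⟨e, ?_⟩⟩
      · rw [div_lt_one (by positivity)]; exact_mod_cast hg3.trans_lt' (by norm_num)
      · rw [hc]; push_cast; field_simp
      · rw [he]; push_cast; rw [div_pow]; field_simp; rw [one_pow, mul_one]
    have p2 : 0 < ((g:ℚ)-1)/g ∧ ((g:ℚ)-1)/g < 1 ∧
        (∃ z : ℤ, (z : ℚ) = ((g:ℚ)-1)/g * a) ∧
        (∃ w : ℤ, (w : ℚ) = (((g:ℚ)-1)/g) ^ k * b) := by
      have hg1 : (1:ℚ) < g := by exact_mod_cast hg3.trans_lt' (by norm_num)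
      refine ⟨div_pos (by linarith) (by linarith), ?_, ⟨(g - 1) * c, ?_⟩, ⟨(g-1)^k * e, ?_⟩⟩
      · rw [div_lt_one (by positivity)]; linarith
      · rw [hc]; push_cast [hg2]; field_simp
      · rw [he]; push_cast [hg2]; rw [div_pow]; field_simp
    have e1 := huniq _ p1
    have e2 := huniq _ p2
    rw [← e2] at e1
    rw [div_eq_div_iff hgQ hgQ] at e1
    have : (g:ℚ) = 2 := by linarith [mul_right_cancel₀ hgQ e1]
    have : g = 2 := by exact_mod_cast this
    omega
  · intro hg
    rw [hg] at hmem
    obtain ⟨c, hc⟩ := hmem.1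
    obtain ⟨e, he⟩ := hmem.2
    refine ⟨1/2, ⟨by norm_num, by norm_num, ⟨c, ?_⟩, ⟨e, ?_⟩⟩, ?_⟩
    · rw [hc]; push_cast; ring
    · rw [he]; push_cast; rw [div_pow]; field_simp; rw [one_pow, mul_one]
    · intro t ht
      obtain ⟨htS, htd⟩ := key t ht
      have hle : t.den ≤ 2 := by
        have := le_csSup hbdd htS
        rwa [← hg]
      have hden : t.den = 2 := le_antisymm hle htd
      have hnum : t.num = 1 := by
        have h1 := num_lt_den t ht.2.1
        have h0 : 0 < t.num := Rat.num_pos.mpr ht.1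
        rw [hden] at h1
        omega
      rw [← Rat.num_div_den t, hnum, hden]
      norm_num
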